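/- Let G act translatively on a poset P and suppose P/G is a poset. Then for every p ∈ P, the restriction of the quotient map to the principal lower interval P_{≤p} is an isomorphism of posets onto (P/G)_{≤Gp}. -/
import Mathlib

/-- Let `G` act translatively on a poset `P` and suppose `P/G` is a poset.
Then for every `p ∈ P` the restriction of the quotient map to `P_{≤p}` is an isomorphism
of posets onto `(P/G)_{≤Gp}`: it is injective on orbits, every orbit below `Gp` has a
(unique) representative below `p`, and it reflects the order. -/
theorem translative_quotient_lower_interval_iso
    {G P : Type*} [Group G] [PartialOrder P] [MulAction G P]
    (hact : ∀ (g : G) (x y : P), x ≤ y ↔ g • x ≤ g • y)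
    (htrans : ∀ (p : P) (g : G), (∃ u : P, p ≤ u ∧ g • p ≤ u) → g • p = p)
    (hposet : ∀ p q : P, (∃ g : G, g • p ≤ q) → (∃ g : G, g • q ≤ p) → ∃ g : G, g • p = q)
    (p : P) :
    (∀ x ∈ Set.Iic p, ∀ y ∈ Set.Iic p, (∃ g : G, g • x = y) → x = y) ∧
    (∀ z : P, (∃ g : G, g • z ≤ p) → ∃ x ∈ Set.Iic p, ∃ g : G, g • z = x) ∧
    (∀ x ∈ Set.Iic p, ∀ y ∈ Set.Iic p, (∃ g : G, g • x ≤ y) → x ≤ y) := by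
  refine ⟨?_, ?_, ?_⟩
  · rintro x hx y hy ⟨g, hg⟩
    have := htrans x g ⟨p, hx, hg ▸ hy⟩
    rw [this] at hg; exact hg
  · rintro z ⟨g, hg⟩
    exact ⟨g • z, hg, g, rfl⟩
  · rintro x hx y hy ⟨g, hg⟩
    have := htrans x g ⟨p, hx, hg.trans hy⟩
    rwa [this] at hg
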